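/- (Theorem 1, expected trajectory error.) Let Θ : ℝ^d → ℝ^{d×p} be a continuous matrix-valued function with ℓ²-operator norm ‖Θ(z)‖₂ ≤ K for all z ∈ ℝ^d. Let A ∈ ℝ^{n×p} be a design matrix whose Gram matrix AᵀA has smallest eigenvalue at least c·n for some c > 0, let ε be a square-integrable random vector in ℝⁿ with mean zero and E[ε εᵀ] = s²·Iₙ, and let ξ̂ = (AᵀA)⁻¹Aᵀ(Aξ* + ε) be the least-squares estimator of ξ* ∈ ℝ^p. Let x : [0,T] → ℝ^d solve x′(t) = Θ(x(t))ξ* with x(0) = x₀, and for each sample point ω let x̂_ω : [0,T] → ℝ^d solve x̂_ω′(t) = Θ(x̂_ω(t))ξ̂(ω) with x̂_ω(0) = x₀, where almost surely the vector field z ↦ Θ(z)ξ̂(ω) is Lipschitz with constant L > 0 and ω ↦ x̂_ω(T) is measurable. Then E[‖x(T) − x̂(T)‖] ≤ (K/L)·(e^{LT} − 1)·s·√(p/(c·n)). -/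

import Mathlib

open MeasureTheory Matrix ProbabilityTheory NNReal

namespace S4


lemma aux_inv_spectral {q : ℕ} {G : Matrix (Fin q) (Fin q) ℝ} (hH : G.IsHermitian)
    {b : ℝ} (hb : 0 < b) (heig : ∀ i, b ≤ hH.eigenvalues i) :
    IsUnit G.det ∧ G⁻¹.trace ≤ q / b := by
  have hpos : ∀ i, 0 < hH.eigenvalues i := fun i => lt_of_lt_of_le hb (heig i)
  have hdet : IsUnit G.det := by
    rw [hH.det_eq_prod_eigenvalues]
    simp only [RCLike.ofReal_real_eq_id, id_eq]
    exact (Finset.prod_pos (fun i _ => hpos i)).ne'.isUnit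
  refine ⟨hdet, ?_⟩
  set U : Matrix (Fin q) (Fin q) ℝ := (hH.eigenvectorUnitary : Matrix (Fin q) (Fin q) ℝ) with hU
  set D : Matrix (Fin q) (Fin q) ℝ := diagonal (RCLike.ofReal ∘ hH.eigenvalues) with hD
  set D' : Matrix (Fin q) (Fin q) ℝ := diagonal (fun i => (hH.eigenvalues i)⁻¹) with hD'
  have hUU : U * star U = 1 := (Matrix.mem_unitaryGroup_iff).mp hH.eigenvectorUnitary.2
  have hUU' : star U * U = 1 := (Matrix.mem_unitaryGroup_iff').mp hH.eigenvectorUnitary.2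
  have h1 : ∀ X : Matrix (Fin q) (Fin q) ℝ, star U * (U * X) = X := fun X => by
    rw [← mul_assoc, hUU', one_mul]
  have h2 : D * D' = 1 := by
    rw [hD, hD', diagonal_mul_diagonal]
    have he : (fun i => (RCLike.ofReal ∘ hH.eigenvalues) i * (hH.eigenvalues i)⁻¹)
        = fun _ => (1:ℝ) := by
      funext i
      simp only [RCLike.ofReal_real_eq_id, id_eq, Function.comp_apply]
      exact mul_inv_cancel₀ (hpos i).ne'
    rw [he]
    exact Matrix.diagonal_one
  have hGinv : G⁻¹ = U * D' * star U := by
    apply Matrix.inv_eq_right_inv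
    conv_lhs => rw [hH.spectral_theorem]
    simp only [Unitary.conjStarAlgAut_apply, Unitary.coe_star, mul_assoc, h1, ← hU, ← hD]
    rw [show D * (D' * star U) = star U by rw [← mul_assoc, h2, one_mul]]
    exact hUU
  rw [hGinv, Matrix.trace_mul_cycle, hUU', one_mul, hD', Matrix.trace_diagonal]
  calc ∑ i, (hH.eigenvalues i)⁻¹ ≤ ∑ _i : Fin q, b⁻¹ :=
        Finset.sum_le_sum fun i _ => inv_anti₀ hb (heig i)
    _ = q / b := by simp [div_eq_mul_inv, mul_comm]

lemma aux_sq {n p : ℕ} {Ω : Type*} [MeasurableSpace Ω] (μ : Measure Ω) [IsProbabilityMeasure μ]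
    (ε : Ω → Fin n → ℝ) (hL2 : ∀ i, MemLp (fun ω => ε ω i) 2 μ) (s : ℝ)
    (hcov : ∀ i j, ∫ ω, ε ω i * ε ω j ∂μ = if i = j then s ^ 2 else 0)
    (M : Matrix (Fin p) (Fin n) ℝ) :
    Integrable (fun ω => ∑ k, (M.mulVec (ε ω) k)^2) μ ∧
    ∫ ω, ∑ k, (M.mulVec (ε ω) k)^2 ∂μ = s^2 * (M * Mᵀ).trace := by
  have hij : ∀ i j : Fin n, Integrable (fun ω => ε ω i * ε ω j) μ := by
    intro i j
    have h := ((hL2 j).smul (hL2 i) (p := 2) (q := 2) (r := 1) (hpqr := ⟨by norm_num [ENNReal.inv_two_add_inv_two]⟩): MemLp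
      ((fun ω => ε ω i) • (fun ω => ε ω j)) 1 μ)
    exact memLp_one_iff_integrable.mp h
  have hsq : ∀ (v : Fin n → ℝ) (k : Fin p),
      (M.mulVec v k)^2 = ∑ i, ∑ j, (M k i * M k j) * (v i * v j) := by
    intro v k
    have h1 : M.mulVec v k = ∑ i, M k i * v i := by
      simp [Matrix.mulVec, dotProduct]
    rw [h1, pow_two, Finset.sum_mul_sum]
    exact Finset.sum_congr rfl fun i _ => Finset.sum_congr rfl fun j _ => by ring
  have hterm : ∀ (k : Fin p) (i j : Fin n),
      Integrable (fun ω => (M k i * M k j) * (ε ω i * ε ω j)) μ :=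
    fun k i j => (hij i j).const_mul _
  have hki : ∀ (k : Fin p), Integrable (fun ω => (M.mulVec (ε ω) k)^2) μ := by
    intro k
    have : (fun ω => (M.mulVec (ε ω) k)^2)
        = fun ω => ∑ i, ∑ j, (M k i * M k j) * (ε ω i * ε ω j) := by
      funext ω; exact hsq (ε ω) k
    rw [this]
    exact integrable_finset_sum _ fun i _ => integrable_finset_sum _ fun j _ => hterm k i j
  refine ⟨integrable_finset_sum _ fun k _ => hki k, ?_⟩
  rw [integral_finset_sum _ fun k _ => hki k]
  have hk : ∀ k : Fin p, ∫ ω, (M.mulVec (ε ω) k)^2 ∂μ = (∑ i, M k i * M k i) * s^2 := by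
    intro k
    simp_rw [hsq (ε _) k]
    rw [integral_finset_sum _ fun i _ => integrable_finset_sum _ fun j _ => hterm k i j]
    have : ∀ i : Fin n, ∫ ω, ∑ j, (M k i * M k j) * (ε ω i * ε ω j) ∂μ
        = (M k i * M k i) * s^2 := by
      intro i
      rw [integral_finset_sum _ fun j _ => hterm k i j]
      have : ∀ j : Fin n, ∫ ω, (M k i * M k j) * (ε ω i * ε ω j) ∂μ
          = (M k i * M k j) * (if i = j then s^2 else 0) := by
        intro j
        rw [MeasureTheory.integral_const_mul, hcov i j]
      simp_rw [this, mul_ite, mul_zero]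
      simp
    simp_rw [this]
    rw [← Finset.sum_mul]
  simp_rw [hk]
  rw [Matrix.trace]
  simp only [Matrix.diag_apply, Matrix.mul_apply, Matrix.transpose_apply]
  rw [Finset.mul_sum]
  exact Finset.sum_congr rfl fun k _ => mul_comm _ _


theorem stmt_4 {d p n : ℕ} (hn : 1 ≤ n) (hp : 1 ≤ p)
    (Θ : EuclideanSpace ℝ (Fin d) → Matrix (Fin d) (Fin p) ℝ) (hcont : Continuous Θ)
    (K : ℝ) (hK : ∀ (z : EuclideanSpace ℝ (Fin d)) (v : EuclideanSpace ℝ (Fin p)),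
      ‖Matrix.toEuclideanLin (Θ z) v‖ ≤ K * ‖v‖)
    (A : Matrix (Fin n) (Fin p) ℝ) (hH : (Aᵀ * A).IsHermitian)
    (c : ℝ) (hc : 0 < c) (heig : ∀ i, c * n ≤ hH.eigenvalues i)
    {Ω : Type*} [MeasurableSpace Ω] (μ : Measure Ω) [IsProbabilityMeasure μ]
    (ε : Ω → Fin n → ℝ) (hL2 : ∀ i, MemLp (fun ω => ε ω i) 2 μ)
    (hmean : ∀ i, ∫ ω, ε ω i ∂μ = 0)
    (s : ℝ) (hs : 0 < s)
    (hcov : ∀ i j, ∫ ω, ε ω i * ε ω j ∂μ = if i = j then s ^ 2 else 0)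
    (ξstar : Fin p → ℝ) (ξhat : Ω → Fin p → ℝ)
    (hξhat : ∀ ω, ξhat ω = ((Aᵀ * A)⁻¹ * Aᵀ).mulVec (A.mulVec ξstar + ε ω))
    (L : ℝ) (hL : 0 < L) (T : ℝ) (hT : 0 ≤ T)
    (x0 : EuclideanSpace ℝ (Fin d)) (x : ℝ → EuclideanSpace ℝ (Fin d)) (hx0 : x 0 = x0)
    (hx : ∀ t ∈ Set.Icc (0:ℝ) T, HasDerivAt x
      (Matrix.toEuclideanLin (Θ (x t)) ((EuclideanSpace.equiv (Fin p) ℝ).symm ξstar)) t)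
    (xhat : Ω → ℝ → EuclideanSpace ℝ (Fin d)) (hxhat0 : ∀ ω, xhat ω 0 = x0)
    (hxhat : ∀ᵐ ω ∂μ,
      (∀ t ∈ Set.Icc (0:ℝ) T, HasDerivAt (xhat ω)
        (Matrix.toEuclideanLin (Θ (xhat ω t))
          ((EuclideanSpace.equiv (Fin p) ℝ).symm (ξhat ω))) t) ∧
      LipschitzWith L.toNNReal
        (fun z => Matrix.toEuclideanLin (Θ z) ((EuclideanSpace.equiv (Fin p) ℝ).symm (ξhat ω))))
    (hmeas : Measurable (fun ω => xhat ω T)) :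
    ∫ ω, ‖x T - xhat ω T‖ ∂μ
      ≤ K / L * (Real.exp (L * T) - 1) * s * Real.sqrt (p / (c * n)) := by
  have hcn : (0:ℝ) < c * n :=
    mul_pos hc (by exact_mod_cast Nat.lt_of_lt_of_le Nat.zero_lt_one hn)
  obtain ⟨hdet, htr⟩ := aux_inv_spectral hH hcn heig
  set e := (EuclideanSpace.equiv (Fin p) ℝ).symm with he
  set G := Aᵀ * A with hG
  set M := G⁻¹ * Aᵀ with hM
  -- M * Mᵀ = G⁻¹
  have hGT : Gᵀ = G := by
    ext i j
    conv_rhs => rw [← hH]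
    simp [Matrix.conjTranspose_apply]
  have hMt : Mᵀ = A * G⁻¹ := by
    rw [hM, Matrix.transpose_mul, Matrix.transpose_transpose, Matrix.transpose_nonsing_inv, hGT]
  have hMMt : M * Mᵀ = G⁻¹ := by
    rw [hM, hMt, Matrix.mul_assoc, ← Matrix.mul_assoc Aᵀ A, ← hG, Matrix.mul_nonsing_inv G hdet, mul_one]
  -- the error vector
  have hΔ : ∀ ω, ξhat ω - ξstar = M.mulVec (ε ω) := by
    intro ω
    rw [hξhat ω, Matrix.mulVec_add]
    have h1 : M.mulVec (A.mulVec ξstar) = ξstar := by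
      rw [Matrix.mulVec_mulVec, hM, Matrix.mul_assoc, ← hG, Matrix.nonsing_inv_mul G hdet,
        Matrix.one_mulVec]
    rw [h1, add_sub_cancel_left]
  -- the scalar error
  set h : Ω → ℝ := fun ω => ‖e (ξhat ω - ξstar)‖ with hh
  have hq : ∀ ω, (h ω)^2 = ∑ k, (M.mulVec (ε ω) k)^2 := by
    intro ω
    rw [hh]
    simp only [EuclideanSpace.norm_eq]
    rw [Real.sq_sqrt (Finset.sum_nonneg fun k _ => sq_nonneg _)]
    refine Finset.sum_congr rfl fun k _ => ?_
    rw [← hΔ ω]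
    simp [he, EuclideanSpace.equiv, Real.norm_eq_abs, sq_abs]
  obtain ⟨hint_q, hEq⟩ := aux_sq μ ε hL2 s hcov M
  have hint_h2 : Integrable (fun ω => (h ω)^2) μ := by
    refine hint_q.congr ?_
    exact Filter.Eventually.of_forall fun ω => (hq ω).symm
  have hEq' : ∫ ω, (h ω)^2 ∂μ = s^2 * G⁻¹.trace := by
    rw [← hMMt, ← hEq]
    exact integral_congr_ae (Filter.Eventually.of_forall fun ω => hq ω)
  -- measurability of h
  have hqm : AEMeasurable (fun ω => ∑ k, (M.mulVec (ε ω) k)^2) μ := by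
    refine Finset.aemeasurable_fun_sum _ fun k _ => ?_
    have h1 : (fun ω => M.mulVec (ε ω) k) = fun ω => ∑ i, M k i * ε ω i := by
      funext ω; simp [Matrix.mulVec, dotProduct]
    have h2 : AEMeasurable (fun ω => M.mulVec (ε ω) k) μ := by
      rw [h1]
      exact Finset.aemeasurable_fun_sum _ fun i _ =>
        ((hL2 i).1.aemeasurable.const_mul _)
    exact h2.pow_const 2
  have hhm : AEStronglyMeasurable h μ := by
    have h1 : h = fun ω => Real.sqrt (∑ k, (M.mulVec (ε ω) k)^2) := by
      funext ω
      rw [← hq ω, Real.sqrt_sq (norm_nonneg _)]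
    rw [h1]
    exact (Real.continuous_sqrt.measurable.comp_aemeasurable hqm).aestronglyMeasurable
  have hMem2 : MemLp h 2 μ := (memLp_two_iff_integrable_sq hhm).2 hint_h2
  have hinth : Integrable h μ := hMem2.integrable (by norm_num)
  -- bound on E h
  have hEh : ∫ ω, h ω ∂μ ≤ s * Real.sqrt (↑p / (c * n)) := by
    have hconj : Real.HolderConjugate 2 2 := Real.holderConjugate_iff.mpr
      ⟨one_lt_two, by norm_num⟩
    have hCS := integral_mul_le_Lp_mul_Lq_of_nonneg hconj
      (Filter.Eventually.of_forall fun ω => norm_nonneg _)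
      (Filter.Eventually.of_forall fun _ => zero_le_one)
      (by rw [ENNReal.ofReal_ofNat]; exact hMem2)
      (by rw [ENNReal.ofReal_ofNat]; exact memLp_const (1:ℝ))
    simp only [mul_one] at hCS
    have hrw : ∀ y : ℝ, y ^ (2:ℝ) = y ^ (2:ℕ) := fun y => by
      rw [show (2:ℝ) = ((2:ℕ):ℝ) by norm_num, Real.rpow_natCast]
    simp only [hrw, one_pow] at hCS
    rw [integral_const, probReal_univ, smul_eq_mul, mul_one,
      Real.one_rpow, mul_one] at hCS
    refine hCS.trans ?_
    rw [← Real.sqrt_eq_rpow]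
    have hle : ∫ ω, (h ω)^2 ∂μ ≤ s^2 * (↑p / (c * n)) := by
      rw [hEq']
      exact mul_le_mul_of_nonneg_left htr (sq_nonneg s)
    refine (Real.sqrt_le_sqrt hle).trans ?_
    rw [Real.sqrt_mul (sq_nonneg s), Real.sqrt_sq hs.le]
  -- nonnegativity of constants
  have hK0 : 0 ≤ K := by
    have h1 := hK x0 (EuclideanSpace.single (⟨0, hp⟩ : Fin p) (1:ℝ))
    rw [EuclideanSpace.norm_single, norm_one, mul_one] at h1
    exact le_trans (norm_nonneg _) h1
  set C : ℝ := K / L * (Real.exp (L * T) - 1) with hC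
  have hC0 : 0 ≤ C := by
    apply mul_nonneg (div_nonneg hK0 hL.le)
    have := Real.one_le_exp (mul_nonneg hL.le hT)
    linarith
  -- Gronwall
  have key : ∀ᵐ ω ∂μ, ‖x T - xhat ω T‖ ≤ C * h ω := by
    filter_upwards [hxhat] with ω hω
    obtain ⟨hode, hlip⟩ := hω
    set f : ℝ → EuclideanSpace ℝ (Fin d) := fun t => x t - xhat ω t with hf
    set v : ℝ → EuclideanSpace ℝ (Fin d) := fun t =>
      Matrix.toEuclideanLin (Θ (x t)) (e ξstar)
        - Matrix.toEuclideanLin (Θ (xhat ω t)) (e (ξhat ω)) with hv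
    have hf' : ∀ t ∈ Set.Icc (0:ℝ) T, HasDerivAt f (v t) t :=
      fun t ht => (hx t ht).sub (hode t ht)
    have hcontf : ContinuousOn f (Set.Icc 0 T) :=
      fun t ht => (hf' t ht).continuousAt.continuousWithinAt
    have hbound : ∀ t ∈ Set.Ico (0:ℝ) T, ‖v t‖ ≤ L * ‖f t‖ + K * h ω := by
      intro t ht
      have hsplit : v t = (Matrix.toEuclideanLin (Θ (x t)) (e ξstar)
          - Matrix.toEuclideanLin (Θ (x t)) (e (ξhat ω)))
          + (Matrix.toEuclideanLin (Θ (x t)) (e (ξhat ω))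
            - Matrix.toEuclideanLin (Θ (xhat ω t)) (e (ξhat ω))) := by
        rw [hv]; abel
      rw [hsplit]
      refine (norm_add_le _ _).trans ?_
      rw [add_comm]
      apply add_le_add
      · have hd := hlip.dist_le_mul (x t) (xhat ω t)
        rw [dist_eq_norm, dist_eq_norm, Real.coe_toNNReal L hL.le] at hd
        exact hd
      · have h1 : Matrix.toEuclideanLin (Θ (x t)) (e ξstar)
            - Matrix.toEuclideanLin (Θ (x t)) (e (ξhat ω))
            = Matrix.toEuclideanLin (Θ (x t)) (e ξstar - e (ξhat ω)) := by
          rw [map_sub]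
        rw [h1]
        refine (hK _ _).trans ?_
        have h2 : e ξstar - e (ξhat ω) = -(e (ξhat ω - ξstar)) := by
          rw [map_sub, neg_sub]
        rw [h2, norm_neg]
    have hzero : ‖f 0‖ ≤ 0 := by
      rw [hf]
      simp [hx0, hxhat0 ω]
    have hgron := norm_le_gronwallBound_of_norm_deriv_right_le hcontf
      (fun t ht => (hf' t (Set.mem_Icc.mpr ⟨ht.1, ht.2.le⟩)).hasDerivWithinAt)
      hzero hbound T (Set.mem_Icc.mpr ⟨hT, le_refl T⟩)
    rw [gronwallBound_of_K_ne_0 hL.ne'] at hgron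
    calc ‖x T - xhat ω T‖ = ‖f T‖ := rfl
      _ ≤ 0 * Real.exp (L * (T - 0)) + K * h ω / L * (Real.exp (L * (T - 0)) - 1) := hgron
      _ = C * h ω := by simp only [sub_zero]; rw [hC]; ring
  -- integrate
  have hint_lhs : Integrable (fun ω => ‖x T - xhat ω T‖) μ := by
    refine Integrable.mono' (hinth.const_mul C) ?_ ?_
    · exact ((measurable_const.sub hmeas).norm).aestronglyMeasurable
    · filter_upwards [key] with ω hω
      rwa [norm_norm]
  calc ∫ ω, ‖x T - xhat ω T‖ ∂μ ≤ ∫ ω, C * h ω ∂μ :=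
        integral_mono_ae hint_lhs (hinth.const_mul C) key
    _ = C * ∫ ω, h ω ∂μ := integral_const_mul C h
    _ ≤ C * (s * Real.sqrt (↑p / (c * n))) := mul_le_mul_of_nonneg_left hEh hC0
    _ = K / L * (Real.exp (L * T) - 1) * s * Real.sqrt (↑p / (c * n)) := by rw [hC]; ring

end S4
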